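/- The Riccati iteration sequence is monotone increasing: each K_t is positive semidefinite and K_t ≤ K_{t+1} in the Loewner order for all t ≥ 0, where K_0 = O and K_{t+1} = π(E[N₁ + A₁ᵀ K_t A₁]). -/

import Mathlib

open MeasureTheory Matrix Filter ProbabilityTheory
open scoped ENNReal NNReal

noncomputable section

instance matrixMeasurableSpace {I J : Type*} : MeasurableSpace (Matrix I J ℝ) :=
  inferInstanceAs (MeasurableSpace (I → J → ℝ))

/-- The Schur-complement map `π(P) = P_xx − P_xu P_uu⁻¹ P_ux`. -/
def piMap {n m : ℕ} (P : Matrix (Fin n ⊕ Fin m) (Fin n ⊕ Fin m) ℝ) :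
    Matrix (Fin n) (Fin n) ℝ :=
  P.toBlocks₁₁ - P.toBlocks₁₂ * P.toBlocks₂₂⁻¹ * P.toBlocks₂₁

/-- The feedback-gain map `Γ(P) = −P_uu⁻¹ P_ux`. -/
def gammaMap {n m : ℕ} (P : Matrix (Fin n ⊕ Fin m) (Fin n ⊕ Fin m) ℝ) :
    Matrix (Fin m) (Fin n) ℝ :=
  -(P.toBlocks₂₂⁻¹ * P.toBlocks₂₁)

/-- Loewner order: `X ≤ Y` iff `Y - X` is positive semidefinite. -/
def loewnerLE {I : Type*} [Fintype I] (X Y : Matrix I I ℝ) : Prop :=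
  (Y - X).PosSemidef

/-- Spectral norm (`2`-norm) of a real matrix. -/
def specNorm {I J : Type*} [Fintype I] [Fintype J] [DecidableEq J]
    (M : Matrix I J ℝ) : ℝ :=
  ‖LinearMap.toContinuousLinearMap (Matrix.toEuclideanLin M)‖

/-- Entrywise expectation of a random matrix. -/
def matExp {Ω : Type*} [MeasurableSpace Ω] (μpr : Measure Ω) {I J : Type*}
    (M : Ω → Matrix I J ℝ) : Matrix I J ℝ :=
  Matrix.of fun i j => ∫ ω, M ω i j ∂μpr

section LQ

variable {n m : ℕ} {Ω : Type*} [MeasurableSpace Ω]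

/-- The filtration `𝓕_t = σ(A_s, N_s : 1 ≤ s ≤ t)` (with `𝓕_0` trivial). -/
def lqFiltration (A : ℕ → Ω → Matrix (Fin n) (Fin n ⊕ Fin m) ℝ)
    (N : ℕ → Ω → Matrix (Fin n ⊕ Fin m) (Fin n ⊕ Fin m) ℝ) :
    ℕ → MeasurableSpace Ω := fun t =>
  ⨆ s ∈ Finset.Icc 1 t, MeasurableSpace.comap (fun ω => (A s ω, N s ω)) inferInstance

/-- A control is admissible if it is adapted to the filtration. -/
def Admissible {k : ℕ} (F : ℕ → MeasurableSpace Ω) (u : ℕ → Ω → Fin k → ℝ) : Prop :=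
  ∀ t, @Measurable Ω (Fin k → ℝ) (F t) _ (u t)

/-- The state process `x_0 = x`, `x_{t+1} = A_{t+1} [x_t; u_t]`. -/
def statePath (A : ℕ → Ω → Matrix (Fin n) (Fin n ⊕ Fin m) ℝ)
    (x : Fin n → ℝ) (u : ℕ → Ω → Fin m → ℝ) : ℕ → Ω → Fin n → ℝ
  | 0 => fun _ => x
  | t + 1 => fun ω => A (t + 1) ω *ᵥ Sum.elim (statePath A x u t ω) (u t ω)

/-- The stage cost `[x_tᵀ, u_tᵀ] N_{t+1} [x_t; u_t]`. -/
def stageCost (A : ℕ → Ω → Matrix (Fin n) (Fin n ⊕ Fin m) ℝ)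
    (N : ℕ → Ω → Matrix (Fin n ⊕ Fin m) (Fin n ⊕ Fin m) ℝ)
    (x : Fin n → ℝ) (u : ℕ → Ω → Fin m → ℝ) (t : ℕ) (ω : Ω) : ℝ :=
  Sum.elim (statePath A x u t ω) (u t ω) ⬝ᵥ
    (N (t + 1) ω *ᵥ Sum.elim (statePath A x u t ω) (u t ω))

/-- The total cost `J(x, u) ∈ [0,∞]`. -/
def costJ (A : ℕ → Ω → Matrix (Fin n) (Fin n ⊕ Fin m) ℝ)
    (N : ℕ → Ω → Matrix (Fin n ⊕ Fin m) (Fin n ⊕ Fin m) ℝ)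
    (x : Fin n → ℝ) (u : ℕ → Ω → Fin m → ℝ) (ω : Ω) : ℝ≥0∞ :=
  ∑' t, ENNReal.ofReal (stageCost A N x u t ω)

/-- The value function `V(x) = inf over admissible u of E[J(x,u)]`. -/
def valueV (μpr : Measure Ω) (A : ℕ → Ω → Matrix (Fin n) (Fin n ⊕ Fin m) ℝ)
    (N : ℕ → Ω → Matrix (Fin n ⊕ Fin m) (Fin n ⊕ Fin m) ℝ)
    (x : Fin n → ℝ) : ℝ≥0∞ :=
  ⨅ (u : ℕ → Ω → Fin m → ℝ) (_ : Admissible (lqFiltration A N) u),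
    ∫⁻ ω, costJ A N x u ω ∂μpr

/-- The Riccati iteration `K_0 = O`, `K_{t+1} = π(E[N₁ + A₁ᵀ K_t A₁])`. -/
def Kseq (μpr : Measure Ω) (A : ℕ → Ω → Matrix (Fin n) (Fin n ⊕ Fin m) ℝ)
    (N : ℕ → Ω → Matrix (Fin n ⊕ Fin m) (Fin n ⊕ Fin m) ℝ) :
    ℕ → Matrix (Fin n) (Fin n) ℝ
  | 0 => 0
  | t + 1 => piMap (matExp μpr (fun ω => N 1 ω + (A 1 ω)ᵀ * Kseq μpr A N t * A 1 ω))

/-- The Q-learning process of Algorithm 1. -/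
def Qproc (A : ℕ → Ω → Matrix (Fin n) (Fin n ⊕ Fin m) ℝ)
    (N : ℕ → Ω → Matrix (Fin n ⊕ Fin m) (Fin n ⊕ Fin m) ℝ)
    (α : ℕ → Ω → ℝ) (Q0 : Matrix (Fin n ⊕ Fin m) (Fin n ⊕ Fin m) ℝ) :
    ℕ → Ω → Matrix (Fin n ⊕ Fin m) (Fin n ⊕ Fin m) ℝ
  | 0 => fun _ => Q0
  | t + 1 => fun ω =>
      Qproc A N α Q0 t ω + α t ω •
        (N (t + 1) ω + (A (t + 1) ω)ᵀ * piMap (Qproc A N α Q0 t ω) * A (t + 1) ω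
          - Qproc A N α Q0 t ω)

end LQ


/-! ### Auxiliary lemmas -/

section AuxLemmas

open scoped Matrix.Norms.L2Operator

lemma specNorm_eq_norm {I J : Type*} [Fintype I] [Fintype J] [DecidableEq J]
    (M : Matrix I J ℝ) : specNorm M = ‖M‖ := rfl

lemma abs_entry_le_specNorm {I J : Type*} [Fintype I] [Fintype J] [DecidableEq J]
    (M : Matrix I J ℝ) (i : I) (j : J) : |M i j| ≤ specNorm M := by
  rw [specNorm_eq_norm]
  have h := M.l2_opNorm_mulVec (EuclideanSpace.single j (1:ℝ))
  rw [EuclideanSpace.norm_single, norm_one, mul_one] at h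
  refine le_trans ?_ h
  set w : EuclideanSpace ℝ I :=
    (EuclideanSpace.equiv I ℝ).symm (M *ᵥ (EuclideanSpace.single j (1:ℝ))) with hw
  have hv : w i = M i j := by
    show (M *ᵥ (EuclideanSpace.single j (1:ℝ) : EuclideanSpace ℝ J)) i = M i j
    simp [mulVec, dotProduct, EuclideanSpace.single_apply]
  have h1 : |M i j| = Real.sqrt (|M i j|^2) := by rw [Real.sqrt_sq_eq_abs, abs_abs]
  rw [h1, EuclideanSpace.norm_eq]
  apply Real.sqrt_le_sqrt
  have h2 : |M i j|^2 = ‖w i‖^2 := by rw [hv, Real.norm_eq_abs]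
  rw [h2]
  exact Finset.single_le_sum (f := fun k => ‖w k‖^2) (fun k _ => by positivity)
    (Finset.mem_univ i)

lemma specNorm_conj_bound {I J : Type*} [Fintype I] [Fintype J]
    [DecidableEq I] [DecidableEq J]
    (Nmat : Matrix J J ℝ) (Amat : Matrix I J ℝ) (K : Matrix I I ℝ) :
    specNorm (Nmat + Amatᵀ * K * Amat) ≤
      specNorm Nmat + specNorm K * specNorm (Amatᵀ * Amat) := by
  simp only [specNorm_eq_norm]
  refine le_trans (norm_add_le _ _) (add_le_add_right ?_ _)
  have hAt : Amatᵀ = Amatᴴ := (conjTranspose_eq_transpose_of_trivial _).symm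
  calc ‖Amatᵀ * K * Amat‖ ≤ ‖Amatᵀ * K‖ * ‖Amat‖ := l2_opNorm_mul _ _
    _ ≤ (‖Amatᵀ‖ * ‖K‖) * ‖Amat‖ :=
        mul_le_mul_of_nonneg_right (l2_opNorm_mul _ _) (norm_nonneg _)
    _ = ‖K‖ * (‖Amat‖ * ‖Amat‖) := by
        rw [hAt, l2_opNorm_conjTranspose]; ring
    _ = ‖K‖ * ‖Amatᵀ * Amat‖ := by
        rw [hAt, l2_opNorm_conjTranspose_mul_self]

lemma specNorm_nonneg {I J : Type*} [Fintype I] [Fintype J] [DecidableEq J]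
    (M : Matrix I J ℝ) : 0 ≤ specNorm M := by
  rw [specNorm_eq_norm]; exact norm_nonneg _

lemma matExp_dotProduct {Ω : Type*} [MeasurableSpace Ω] (μ : Measure Ω)
    {I : Type*} [Fintype I] (M : Ω → Matrix I I ℝ)
    (hint : ∀ i j, Integrable (fun ω => M ω i j) μ) (x : I → ℝ) :
    x ⬝ᵥ (matExp μ M *ᵥ x) = ∫ ω, x ⬝ᵥ (M ω *ᵥ x) ∂μ := by
  classical
  have key : ∀ (P : Matrix I I ℝ),
      x ⬝ᵥ (P *ᵥ x) = ∑ p : I × I, x p.1 * P p.1 p.2 * x p.2 := by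
    intro P
    rw [Fintype.sum_prod_type]
    simp [dotProduct, mulVec, Finset.mul_sum, mul_assoc]
  rw [key]
  have hcalc : ∫ ω, x ⬝ᵥ (M ω *ᵥ x) ∂μ
      = ∫ ω, ∑ p : I × I, x p.1 * M ω p.1 p.2 * x p.2 ∂μ := by
    congr 1; ext ω; rw [key]
  rw [hcalc, integral_finset_sum]
  · refine Finset.sum_congr rfl fun p _ => ?_
    have : (fun ω => x p.1 * M ω p.1 p.2 * x p.2)
        = fun ω => x p.1 * (M ω p.1 p.2 * x p.2) := by ext ω; ring
    rw [this, integral_const_mul]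
    have : (matExp μ M) p.1 p.2 = ∫ ω, M ω p.1 p.2 ∂μ := rfl
    rw [this, integral_mul_const]
    ring
  · intro p _
    exact ((hint p.1 p.2).const_mul (x p.1)).mul_const (x p.2)

lemma matExp_posSemidef {Ω : Type*} [MeasurableSpace Ω] (μ : Measure Ω)
    {I : Type*} [Fintype I] (M : Ω → Matrix I I ℝ)
    (hpsd : ∀ ω, (M ω).PosSemidef)
    (hint : ∀ i j, Integrable (fun ω => M ω i j) μ) :
    (matExp μ M).PosSemidef := by
  rw [posSemidef_iff_dotProduct_mulVec]
  constructor
  · ext i j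
    show star ((matExp μ M) j i) = (matExp μ M) i j
    have : ∀ ω, M ω j i = M ω i j := by
      intro ω
      have := (hpsd ω).1
      calc M ω j i = star (M ω j i) := (star_trivial _).symm
        _ = (M ω)ᴴ i j := rfl
        _ = M ω i j := by rw [this]
    show (∫ ω, M ω j i ∂μ) = ∫ ω, M ω i j ∂μ
    exact integral_congr_ae (Filter.Eventually.of_forall this)
  · intro y
    have hst : star y = y := star_trivial _
    rw [hst, matExp_dotProduct μ M hint y]
    refine integral_nonneg fun ω => ?_
    have := (hpsd ω).dotProduct_mulVec_nonneg y
    rwa [hst] at this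

lemma matExp_add {Ω : Type*} [MeasurableSpace Ω] (μ : Measure Ω)
    {I J : Type*} (M M' : Ω → Matrix I J ℝ)
    (h1 : ∀ i j, Integrable (fun ω => M ω i j) μ)
    (h2 : ∀ i j, Integrable (fun ω => M' ω i j) μ) :
    matExp μ (fun ω => M ω + M' ω) = matExp μ M + matExp μ M' := by
  ext i j
  show (∫ ω, (M ω i j + M' ω i j) ∂μ) = (∫ ω, M ω i j ∂μ) + ∫ ω, M' ω i j ∂μ
  exact integral_add (h1 i j) (h2 i j)

lemma matExp_sub {Ω : Type*} [MeasurableSpace Ω] (μ : Measure Ω)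
    {I J : Type*} (M M' : Ω → Matrix I J ℝ)
    (h1 : ∀ i j, Integrable (fun ω => M ω i j) μ)
    (h2 : ∀ i j, Integrable (fun ω => M' ω i j) μ) :
    matExp μ M' - matExp μ M = matExp μ (fun ω => M' ω - M ω) := by
  ext i j
  show (∫ ω, M' ω i j ∂μ) - (∫ ω, M ω i j ∂μ) = ∫ ω, (M' ω i j - M ω i j) ∂μ
  exact (integral_sub (h2 i j) (h1 i j)).symm

lemma PosDef.toBlocks₂₂' {I J : Type*} [Fintype I] [Fintype J] [DecidableEq I] [DecidableEq J]
    {P : Matrix (I ⊕ J) (I ⊕ J) ℝ} (h : P.PosDef) : P.toBlocks₂₂.PosDef := by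
  rw [posDef_iff_dotProduct_mulVec]
  constructor
  · ext i j
    show star (P.toBlocks₂₂ j i) = P.toBlocks₂₂ i j
    have := congrFun (congrFun h.1 (Sum.inr i)) (Sum.inr j)
    exact this
  · intro v hv
    have hz : (Sum.elim (0 : I → ℝ) v) ≠ 0 := by
      intro hc
      apply hv
      ext j
      exact congrFun hc (Sum.inr j)
    have := h.dotProduct_mulVec_pos hz
    convert this using 1
    simp [dotProduct, mulVec, Fintype.sum_sum_type, toBlocks₂₂]

lemma toBlocks₂₁_eq_of_isHermitian {I J : Type*}
    {P : Matrix (I ⊕ J) (I ⊕ J) ℝ} (h : P.IsHermitian) :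
    P.toBlocks₂₁ = (P.toBlocks₁₂)ᴴ := by
  ext i j
  show P (Sum.inr i) (Sum.inl j) = star (P (Sum.inl j) (Sum.inr i))
  exact (congrFun (congrFun h (Sum.inr i)) (Sum.inl j)).symm

lemma piMap_posSemidef {nn mm : ℕ} {P : Matrix (Fin nn ⊕ Fin mm) (Fin nn ⊕ Fin mm) ℝ}
    (hP : P.PosSemidef) (huu : P.toBlocks₂₂.PosDef) : (piMap P).PosSemidef := by
  haveI : Invertible P.toBlocks₂₂ := huu.isUnit.invertible
  have hB : P.toBlocks₂₁ = (P.toBlocks₁₂)ᴴ := toBlocks₂₁_eq_of_isHermitian hP.1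
  have key := (Matrix.PosDef.fromBlocks₂₂ P.toBlocks₁₁ P.toBlocks₁₂ huu).1
  rw [piMap, hB]
  apply key
  rw [← hB, fromBlocks_toBlocks]
  exact hP

lemma piMap_mono {nn mm : ℕ} {P Q : Matrix (Fin nn ⊕ Fin mm) (Fin nn ⊕ Fin mm) ℝ}
    (hP : P.PosSemidef) (hQ : Q.PosSemidef)
    (hPuu : P.toBlocks₂₂.PosDef) (hQuu : Q.toBlocks₂₂.PosDef)
    (hle : (Q - P).PosSemidef) : (piMap Q - piMap P).PosSemidef := by
  haveI : Invertible P.toBlocks₂₂ := hPuu.isUnit.invertible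
  haveI : Invertible Q.toBlocks₂₂ := hQuu.isUnit.invertible
  have hBP : P.toBlocks₂₁ = (P.toBlocks₁₂)ᴴ := toBlocks₂₁_eq_of_isHermitian hP.1
  have hBQ : Q.toBlocks₂₁ = (Q.toBlocks₁₂)ᴴ := toBlocks₂₁_eq_of_isHermitian hQ.1
  rw [posSemidef_iff_dotProduct_mulVec]
  constructor
  · exact ((piMap_posSemidef hQ hQuu).1).sub ((piMap_posSemidef hP hPuu).1)
  · intro x
    rw [star_trivial]
    set y : Fin mm → ℝ := -((Q.toBlocks₂₂⁻¹ * Q.toBlocks₂₁) *ᵥ x) with hy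
    set z : (Fin nn ⊕ Fin mm) → ℝ := Sum.elim x y with hz
    -- quadratic identity for Q
    have eQ := Matrix.schur_complement_eq₂₂ Q.toBlocks₁₁ Q.toBlocks₁₂ x y hQuu.1
    rw [← hBQ, fromBlocks_toBlocks] at eQ
    have hzero : (Q.toBlocks₂₂⁻¹ * Q.toBlocks₂₁) *ᵥ x + y = 0 := by
      rw [hy]; abel
    rw [hzero] at eQ
    simp only [star_zero, Matrix.zero_vecMul, zero_dotProduct, zero_add] at eQ
    -- quadratic identity for P
    have eP := Matrix.schur_complement_eq₂₂ P.toBlocks₁₁ P.toBlocks₁₂ x y hPuu.1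
    rw [← hBP, fromBlocks_toBlocks] at eP
    -- the three inequalities
    have h1 : star z ᵥ* P ⬝ᵥ z ≤ star z ᵥ* Q ⬝ᵥ z := by
      have := hle.dotProduct_mulVec_nonneg z
      rw [Matrix.sub_mulVec, dotProduct_sub, dotProduct_mulVec, dotProduct_mulVec,
        sub_nonneg] at this
      exact this
    have h2 : star x ᵥ* (piMap P) ⬝ᵥ x ≤ star z ᵥ* P ⬝ᵥ z := by
      rw [eP]
      have hnn : 0 ≤ star ((P.toBlocks₂₂⁻¹ * P.toBlocks₂₁) *ᵥ x + y) ᵥ*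
          P.toBlocks₂₂ ⬝ᵥ ((P.toBlocks₂₂⁻¹ * P.toBlocks₂₁) *ᵥ x + y) := by
        rw [← dotProduct_mulVec]
        exact hPuu.posSemidef.dotProduct_mulVec_nonneg _
      rw [piMap]
      linarith
    have h3 : star z ᵥ* Q ⬝ᵥ z = star x ᵥ* (piMap Q) ⬝ᵥ x := by
      rw [show z = x ⊕ᵥ y from rfl, eQ, piMap]
    rw [sub_mulVec, dotProduct_sub, dotProduct_mulVec, dotProduct_mulVec, sub_nonneg]
    have hsx : star x = x := star_trivial _
    calc star x ᵥ* (piMap P) ⬝ᵥ x ≤ star z ᵥ* P ⬝ᵥ z := h2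
      _ ≤ star z ᵥ* Q ⬝ᵥ z := h1
      _ = star x ᵥ* (piMap Q) ⬝ᵥ x := h3

end AuxLemmas

/-- The Riccati iteration is positive semidefinite and monotone increasing. -/
theorem Kseq_monotone
    {n m : ℕ} {Ω : Type*} [MeasurableSpace Ω]
    (μpr : Measure Ω) [IsProbabilityMeasure μpr]
    (A : ℕ → Ω → Matrix (Fin n) (Fin n ⊕ Fin m) ℝ)
    (N : ℕ → Ω → Matrix (Fin n ⊕ Fin m) (Fin n ⊕ Fin m) ℝ)
    (hmeas : ∀ t : ℕ, Measurable fun ω => (A (t + 1) ω, N (t + 1) ω))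
    (hindep : ProbabilityTheory.iIndepFun
      (fun (t : ℕ) (ω : Ω) => (A (t + 1) ω, N (t + 1) ω)) μpr)
    (hident : ∀ t : ℕ, ProbabilityTheory.IdentDistrib
      (fun ω => (A (t + 1) ω, N (t + 1) ω)) (fun ω => (A 1 ω, N 1 ω)) μpr μpr)
    (hNpsd : ∀ (t : ℕ) (ω : Ω), (N (t + 1) ω).PosSemidef)
    (hmom : Integrable
      (fun ω => specNorm (N 1 ω) ^ 2 + specNorm ((A 1 ω)ᵀ * A 1 ω) ^ 2) μpr)
    (hENpos : (matExp μpr (N 1)).PosDef)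
    : ∀ t : ℕ, (Kseq μpr A N t).PosSemidef ∧
      loewnerLE (Kseq μpr A N t) (Kseq μpr A N (t + 1)) := by
  classical
  -- notation
  set A1 : Ω → Matrix (Fin n) (Fin n ⊕ Fin m) ℝ := A 1 with hA1def
  have hA1meas : Measurable (A 1) := (measurable_fst.comp (hmeas 0) : _)
  have hN1meas : Measurable (N 1) := (measurable_snd.comp (hmeas 0) : _)
  haveI : BorelSpace (Matrix (Fin n ⊕ Fin m) (Fin n ⊕ Fin m) ℝ) :=
    inferInstanceAs (BorelSpace ((Fin n ⊕ Fin m) → (Fin n ⊕ Fin m) → ℝ))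
  haveI : BorelSpace (Matrix (Fin n) (Fin n ⊕ Fin m) ℝ) :=
    inferInstanceAs (BorelSpace ((Fin n) → (Fin n ⊕ Fin m) → ℝ))
  haveI : SecondCountableTopology (Matrix (Fin n) (Fin n ⊕ Fin m) ℝ) :=
    inferInstanceAs (SecondCountableTopology ((Fin n) → (Fin n ⊕ Fin m) → ℝ))
  haveI : BorelSpace (Matrix (Fin n) (Fin n ⊕ Fin m) ℝ ×
      Matrix (Fin n ⊕ Fin m) (Fin n ⊕ Fin m) ℝ) := Prod.borelSpace
  -- integrable dominating function
  set g : Ω → ℝ := fun ω => specNorm (N 1 ω) ^ 2 + specNorm ((A 1 ω)ᵀ * A 1 ω) ^ 2 with hgdef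
  have hgint : Integrable g μpr := hmom
  -- entrywise integrability of N + AᵀKA for any psd K
  have hMint : ∀ (K : Matrix (Fin n) (Fin n) ℝ),
      ∀ i j, Integrable (fun ω => (N 1 ω + (A 1 ω)ᵀ * K * A 1 ω) i j) μpr := by
    intro K i j
    have hKnn : 0 ≤ specNorm K := specNorm_nonneg _
    refine Integrable.mono' (g := fun ω => (1 + specNorm K) * (1 + g ω))
      (((integrable_const (1:ℝ)).add hgint).const_mul _) ?_ ?_
    · -- measurability
      have hcont : Continuous (fun p : (Matrix (Fin n) (Fin n ⊕ Fin m) ℝ ×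
          Matrix (Fin n ⊕ Fin m) (Fin n ⊕ Fin m) ℝ) => p.2 + p.1ᵀ * K * p.1) :=
        continuous_snd.add
          (((continuous_fst.matrix_transpose).matrix_mul continuous_const).matrix_mul
            continuous_fst)
      have hmm : Measurable (fun ω => N 1 ω + (A 1 ω)ᵀ * K * A 1 ω) :=
        hcont.measurable.comp (hmeas 0)
      exact ((measurable_pi_apply j).comp ((measurable_pi_apply i).comp hmm)).aestronglyMeasurable
    · refine Filter.Eventually.of_forall fun ω => ?_
      have e1 : |(N 1 ω + (A 1 ω)ᵀ * K * A 1 ω) i j| ≤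
          specNorm (N 1 ω + (A 1 ω)ᵀ * K * A 1 ω) := abs_entry_le_specNorm _ i j
      have e2 := specNorm_conj_bound (N 1 ω) (A 1 ω) K
      have nN : 0 ≤ specNorm (N 1 ω) := specNorm_nonneg _
      have nA : 0 ≤ specNorm ((A 1 ω)ᵀ * A 1 ω) := specNorm_nonneg _
      rw [Real.norm_eq_abs]
      have : |(N 1 ω + (A 1 ω)ᵀ * K * A 1 ω) i j| ≤
          specNorm (N 1 ω) + specNorm K * specNorm ((A 1 ω)ᵀ * A 1 ω) := le_trans e1 e2
      refine le_trans this ?_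
      simp only [hgdef]
      nlinarith [sq_nonneg (specNorm (N 1 ω) - 1), sq_nonneg (specNorm ((A 1 ω)ᵀ * A 1 ω) - 1),
        sq_nonneg (specNorm (N 1 ω)), sq_nonneg (specNorm ((A 1 ω)ᵀ * A 1 ω))]
  have hNint : ∀ i j, Integrable (fun ω => N 1 ω i j) μpr := by
    intro i j
    have := hMint 0 i j
    simpa using this
  have hAKAint : ∀ (K : Matrix (Fin n) (Fin n) ℝ),
      ∀ i j, Integrable (fun ω => ((A 1 ω)ᵀ * K * A 1 ω) i j) μpr := by
    intro K i j
    have heq : (fun ω => ((A 1 ω)ᵀ * K * A 1 ω) i j)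
        = fun ω => (N 1 ω + (A 1 ω)ᵀ * K * A 1 ω) i j - N 1 ω i j := by
      ext ω; simp
    rw [heq]
    exact (hMint K i j).sub (hNint i j)
  -- pointwise psd
  have hAKApsd : ∀ (K : Matrix (Fin n) (Fin n) ℝ), K.PosSemidef →
      ∀ ω, ((A 1 ω)ᵀ * K * A 1 ω).PosSemidef := by
    intro K hK ω
    have := hK.conjTranspose_mul_mul_same (A 1 ω)
    rwa [conjTranspose_eq_transpose_of_trivial] at this
  have hMpsd : ∀ (K : Matrix (Fin n) (Fin n) ℝ), K.PosSemidef →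
      ∀ ω, (N 1 ω + (A 1 ω)ᵀ * K * A 1 ω).PosSemidef := by
    intro K hK ω
    exact (hNpsd 0 ω).add (hAKApsd K hK ω)
  -- the expected matrix is psd with pd lower-right block
  have hEpsd : ∀ (K : Matrix (Fin n) (Fin n) ℝ), K.PosSemidef →
      (matExp μpr (fun ω => N 1 ω + (A 1 ω)ᵀ * K * A 1 ω)).PosSemidef :=
    fun K hK => matExp_posSemidef μpr _ (hMpsd K hK) (hMint K)
  have hEuu : ∀ (K : Matrix (Fin n) (Fin n) ℝ), K.PosSemidef →
      (matExp μpr (fun ω => N 1 ω + (A 1 ω)ᵀ * K * A 1 ω)).toBlocks₂₂.PosDef := by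
    intro K hK
    have hsplit : matExp μpr (fun ω => N 1 ω + (A 1 ω)ᵀ * K * A 1 ω)
        = matExp μpr (N 1) + matExp μpr (fun ω => (A 1 ω)ᵀ * K * A 1 ω) :=
      matExp_add μpr _ _ hNint (hAKAint K)
    rw [hsplit]
    have hadd : (matExp μpr (N 1) + matExp μpr (fun ω => (A 1 ω)ᵀ * K * A 1 ω)).toBlocks₂₂
        = (matExp μpr (N 1)).toBlocks₂₂ +
          (matExp μpr (fun ω => (A 1 ω)ᵀ * K * A 1 ω)).toBlocks₂₂ := rfl
    rw [hadd]
    have h1 : (matExp μpr (N 1)).toBlocks₂₂.PosDef := PosDef.toBlocks₂₂' hENpos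
    have h2 : (matExp μpr (fun ω => (A 1 ω)ᵀ * K * A 1 ω)).toBlocks₂₂.PosSemidef := by
      have := matExp_posSemidef μpr _ (fun ω => hAKApsd K hK ω) (hAKAint K)
      exact this.submatrix Sum.inr
    exact h1.add_posSemidef h2
  -- monotonicity of expectation step
  have hEmono : ∀ (K K' : Matrix (Fin n) (Fin n) ℝ), K.PosSemidef → (K' - K).PosSemidef →
      (matExp μpr (fun ω => N 1 ω + (A 1 ω)ᵀ * K' * A 1 ω)
        - matExp μpr (fun ω => N 1 ω + (A 1 ω)ᵀ * K * A 1 ω)).PosSemidef := by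
    intro K K' hK hle
    rw [matExp_sub μpr _ _ (hMint K) (hMint K')]
    have heq : (fun ω => (N 1 ω + (A 1 ω)ᵀ * K' * A 1 ω)
        - (N 1 ω + (A 1 ω)ᵀ * K * A 1 ω))
        = fun ω => (A 1 ω)ᵀ * (K' - K) * A 1 ω := by
      funext ω
      rw [Matrix.mul_sub, Matrix.sub_mul]
      abel
    rw [heq]
    exact matExp_posSemidef μpr _ (fun ω => hAKApsd _ hle ω) (hAKAint (K' - K))
  -- the induction
  intro t
  induction t with
  | zero =>
    constructor
    · show (0 : Matrix (Fin n) (Fin n) ℝ).PosSemidef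
      exact Matrix.PosSemidef.zero
    · show (Kseq μpr A N 1 - 0).PosSemidef
      rw [sub_zero]
      show (piMap (matExp μpr (fun ω => N 1 ω + (A 1 ω)ᵀ * Kseq μpr A N 0 * A 1 ω))).PosSemidef
      have h0 : (Kseq μpr A N 0) = (0 : Matrix (Fin n) (Fin n) ℝ) := rfl
      rw [h0]
      exact piMap_posSemidef (hEpsd 0 Matrix.PosSemidef.zero) (hEuu 0 Matrix.PosSemidef.zero)
  | succ t ih =>
    obtain ⟨hpsd, hmono⟩ := ih
    have hpsd' : (Kseq μpr A N (t+1)).PosSemidef := by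
      have := hmono.add hpsd
      rwa [sub_add_cancel] at this
    refine ⟨hpsd', ?_⟩
    show (Kseq μpr A N (t+2) - Kseq μpr A N (t+1)).PosSemidef
    have e1 : Kseq μpr A N (t+1)
        = piMap (matExp μpr (fun ω => N 1 ω + (A 1 ω)ᵀ * Kseq μpr A N t * A 1 ω)) := rfl
    have e2 : Kseq μpr A N (t+2)
        = piMap (matExp μpr (fun ω => N 1 ω + (A 1 ω)ᵀ * Kseq μpr A N (t+1) * A 1 ω)) := rfl
    rw [e1, e2]
    exact piMap_mono (hEpsd _ hpsd) (hEpsd _ hpsd') (hEuu _ hpsd) (hEuu _ hpsd')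
      (hEmono _ _ hpsd hmono)

end
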